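/- Let C be the Collatz function on positive integers. For every n ≥ 1, the map sending a positive integer x to its parity vector (x mod 2, C(x) mod 2, …, C^{n−1}(x) mod 2) ∈ {0,1}ⁿ is surjective; since this parity vector depends only on x modulo 2ⁿ, the induced map from residues modulo 2ⁿ to {0,1}ⁿ is a bijection. -/

import Mathlib

/-- The Collatz function: `x/2` for even `x` and `(3x+1)/2` for odd `x`. -/
def collatz (x : ℕ) : ℕ := if x % 2 = 0 then x / 2 else (3 * x + 1) / 2

lemma half_modEq {m a b : ℕ} (ha : 2 ∣ a) (hb : 2 ∣ b) (h : a ≡ b [MOD 2 * m]) :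
    a / 2 ≡ b / 2 [MOD m] := by
  obtain ⟨a', rfl⟩ := ha
  obtain ⟨b', rfl⟩ := hb
  simp only [Nat.mul_div_cancel_left _ two_pos]
  exact (Nat.ModEq.mul_left_cancel' two_ne_zero h)

lemma collatz_modEq {m x y : ℕ} (h : x ≡ y [MOD 2 * m]) : collatz x ≡ collatz y [MOD m] := by
  have h2 : x % 2 = y % 2 := h.of_dvd ⟨m, rfl⟩
  unfold collatz
  rcases Nat.even_or_odd x with he | ho
  · have hx : x % 2 = 0 := Nat.even_iff.mp he
    rw [hx, ← h2, hx]
    simp only [if_pos rfl]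
    exact half_modEq (Nat.dvd_of_mod_eq_zero hx) (Nat.dvd_of_mod_eq_zero (h2 ▸ hx)) h
  · have hx : x % 2 = 1 := Nat.odd_iff.mp ho
    rw [hx, ← h2, hx]
    simp only [if_neg one_ne_zero]
    refine half_modEq ?_ ?_ ((h.mul_left 3).add_right 1)
    · omega
    · omega

lemma iter_modEq : ∀ (k : ℕ) {m x y : ℕ}, x ≡ y [MOD 2 ^ k * m] →
    collatz^[k] x ≡ collatz^[k] y [MOD m]
  | 0, m, x, y, h => by simpa using h
  | (k+1), m, x, y, h => by
    rw [Function.iterate_succ_apply, Function.iterate_succ_apply]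
    refine iter_modEq k ?_
    refine collatz_modEq ?_
    have : 2 ^ (k+1) * m = 2 * (2 ^ k * m) := by ring
    rwa [this] at h

lemma parity_eq {n x y : ℕ} (h : x ≡ y [MOD 2 ^ n]) {k : ℕ} (hk : k < n) :
    ((collatz^[k] x : ℕ) : ZMod 2) = ((collatz^[k] y : ℕ) : ZMod 2) := by
  rw [ZMod.natCast_eq_natCast_iff]
  have h2 : x ≡ y [MOD 2 ^ k * 2 ^ (n - k)] := by
    rwa [← pow_add, Nat.add_sub_cancel' hk.le]
  exact (iter_modEq k h2).of_dvd (dvd_pow_self 2 (by omega))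

lemma exists_vec : ∀ (n : ℕ) (v : Fin n → ZMod 2), ∃ x : ℕ, 0 < x ∧
    ∀ k : Fin n, ((collatz^[k.val] x : ℕ) : ZMod 2) = v k
  | 0, v => ⟨1, one_pos, fun k => k.elim0⟩
  | (n+1), v => by
    obtain ⟨y, hy, hyv⟩ := exists_vec n (v ∘ Fin.succ)
    rcases eq_or_ne (v 0) 0 with h0 | h0
    · refine ⟨2 * y, by omega, ?_⟩
      have hc : collatz (2 * y) = y := by
        unfold collatz
        simp [Nat.mul_mod_right, Nat.mul_div_cancel_left _ two_pos]
      intro k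
      refine Fin.cases ?_ (fun i => ?_) k
      · simp only [Fin.val_zero, Function.iterate_zero, id_eq, h0]
        have : ((2 * y : ℕ) : ZMod 2) = ((0 : ℕ) : ZMod 2) := by
          rw [ZMod.natCast_eq_natCast_iff]
          unfold Nat.ModEq
          omega
        simpa using this
      · rw [Fin.val_succ, Function.iterate_succ_apply, hc]
        exact hyv i
    · have h0' : v 0 = 1 := by
        have : ∀ a : ZMod 2, a ≠ 0 → a = 1 := by decide
        exact this _ h0
      set N := 2 ^ (n+1) with hN
      haveI : NeZero N := ⟨by positivity⟩
      have hcop : Nat.Coprime 3 N := Nat.Coprime.pow_right _ (by decide)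
      have hunit : IsUnit (3 : ZMod N) := by
        have : IsUnit ((3 : ℕ) : ZMod N) := by
          rw [ZMod.isUnit_iff_coprime]; exact hcop
        simpa using this
      set r : ZMod N := (2 * (y : ZMod N) - 1) * (3 : ZMod N)⁻¹ with hr
      refine ⟨r.val + N, by positivity, ?_⟩
      have h31 : 3 * (r.val + N) + 1 ≡ 2 * y [MOD N] := by
        rw [← ZMod.natCast_eq_natCast_iff]
        push_cast
        rw [ZMod.natCast_self, ZMod.natCast_val, ZMod.cast_id]
        rw [hr]
        rw [add_zero, mul_comm (3 : ZMod N), mul_assoc, ZMod.inv_mul_of_unit _ hunit, mul_one]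
        ring
      have hxodd : (r.val + N) % 2 = 1 := by
        have h2 : (3 * (r.val + N) + 1) % 2 = (2 * y) % 2 :=
          h31.of_dvd (dvd_pow_self 2 (by omega))
        omega
      have hc : collatz (r.val + N) = (3 * (r.val + N) + 1) / 2 := by
        unfold collatz; rw [hxodd]; simp
      have hcy : collatz (r.val + N) ≡ y [MOD 2 ^ n] := by
        rw [hc]
        have h31' : 3 * (r.val + N) + 1 ≡ 2 * y [MOD 2 * 2 ^ n] := by
          have e : N = 2 * 2 ^ n := by rw [hN]; ring
          rw [← e]
          exact h31
        have := half_modEq (by omega) ⟨y, rfl⟩ h31'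
        rwa [Nat.mul_div_cancel_left _ two_pos] at this
      intro k
      refine Fin.cases ?_ (fun i => ?_) k
      · simp only [Fin.val_zero, Function.iterate_zero, id_eq, h0']
        have : ((r.val + N : ℕ) : ZMod 2) = ((1 : ℕ) : ZMod 2) := by
          rw [ZMod.natCast_eq_natCast_iff]
          unfold Nat.ModEq
          omega
        simpa using this
      · rw [Fin.val_succ, Function.iterate_succ_apply]
        rw [parity_eq hcy i.isLt]
        exact hyv i

/-- for `n ≥ 1`, the map sending a positive integer `x` to its parity vector
`(x mod 2, C(x) mod 2, …, C^{n−1}(x) mod 2)` is surjective; the parity vector depends only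
on `x` modulo `2ⁿ`; and the induced map from residues modulo `2ⁿ` to `{0,1}ⁿ`
(evaluated on the positive representatives `r + 2ⁿ`) is a bijection. -/
theorem collatz_parity_vector_bijective (n : ℕ) (hn : 1 ≤ n) :
    (∀ v : Fin n → ZMod 2, ∃ x : ℕ, 0 < x ∧
      ∀ k : Fin n, ((collatz^[k.val] x : ℕ) : ZMod 2) = v k) ∧
    (∀ x y : ℕ, 0 < x → 0 < y → x ≡ y [MOD 2 ^ n] →
      ∀ k : Fin n, ((collatz^[k.val] x : ℕ) : ZMod 2) = ((collatz^[k.val] y : ℕ) : ZMod 2)) ∧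
    Function.Bijective (fun r : ZMod (2 ^ n) =>
      fun k : Fin n => ((collatz^[k.val] (r.val + 2 ^ n) : ℕ) : ZMod 2)) := by
  refine ⟨exists_vec n, ?_, ?_⟩
  · intro x y _ _ h k
    exact parity_eq h k.isLt
  · haveI : NeZero (2 ^ n) := ⟨by positivity⟩
    rw [Fintype.bijective_iff_surjective_and_card]
    constructor
    · intro v
      obtain ⟨x, hx, hxv⟩ := exists_vec n v
      refine ⟨(x : ZMod (2 ^ n)), ?_⟩
      funext k
      have hval : (x : ZMod (2 ^ n)).val = x % 2 ^ n := ZMod.val_natCast _ x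
      have hmod : ((x : ZMod (2 ^ n)).val + 2 ^ n) ≡ x [MOD 2 ^ n] := by
        rw [hval]
        show (x % 2 ^ n + 2 ^ n) % 2 ^ n = x % 2 ^ n
        rw [Nat.add_mod_right, Nat.mod_mod_of_dvd _ dvd_rfl]
      simp only
      rw [parity_eq hmod k.isLt]
      exact hxv k
    · simp [ZMod.card, Fintype.card_fun]
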